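/- Let n, r be positive integers and c, d integers, with 𝒹₁ = gcd(c−d, n) and 𝒹₂ = gcd(c+(r−1)d, n). Define Λ_fin = {x ∈ (ℤ/nℤ)^r : B·x = 0}, where B is the r×r matrix with diagonal entries c and off-diagonal entries d. Then the map θ: x ↦ (ρ − x) mod (n/𝒹₁) (applied componentwise, with ρ = (r−1, r−2, ..., 1, 0)) is constant on Λ_fin if and only if gcd(𝒹₂, d·n/𝒹₁) = gcd(c, d, n). -/

import Mathlib

lemma aux1 (c d : ℤ) (n m d₁ : ℕ) (hn : 0 < n) (hd₁ : d₁ = Int.gcd (c-d) n)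
    (hnm : n = d₁ * m) (w : ℤ) (h : (n:ℤ) ∣ (c-d)*w) : (m:ℤ) ∣ w := by
  have hb : ((d₁:ℕ):ℤ) = (c-d) * Int.gcdA (c-d) n + n * Int.gcdB (c-d) n := by
    rw [hd₁]; exact Int.gcd_eq_gcd_ab _ _
  have h2 : (n:ℤ) ∣ (d₁:ℤ) * w := by
    have : (d₁:ℤ) * w = Int.gcdA (c-d) n * ((c-d)*w) + (n:ℤ) * (Int.gcdB (c-d) n * w) := by
      rw [hb]; ring
    rw [this]
    exact dvd_add (Dvd.dvd.mul_left h _) (Dvd.intro _ rfl)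
  have hd₁0 : (d₁:ℤ) ≠ 0 := by
    have : 0 < d₁ := by
      rw [hd₁, Int.gcd_pos_iff]; right; exact_mod_cast hn.ne'
    exact_mod_cast this.ne'
  have h3 : (d₁:ℤ) * m ∣ (d₁:ℤ) * w := by
    have hc : ((n:ℕ):ℤ) = (d₁:ℤ) * m := by exact_mod_cast congrArg (Nat.cast : ℕ → ℤ) hnm
    rwa [hc] at h2
  exact (mul_dvd_mul_iff_left hd₁0).mp h3

lemma aux2 (c d : ℤ) (n m d₁ : ℕ) (hd₁ : d₁ = Int.gcd (c-d) n)
    (hnm : n = d₁ * m) (w : ℤ) (h : (m:ℤ) ∣ w) : (n:ℤ) ∣ (c-d)*w := by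
  obtain ⟨e, he⟩ : (d₁:ℤ) ∣ (c-d) := hd₁ ▸ (Int.gcd_dvd_left _ _)
  obtain ⟨t, ht⟩ := h
  have hnz : ((n:ℕ):ℤ) = (d₁:ℤ) * m := by exact_mod_cast congrArg (Nat.cast : ℕ → ℤ) hnm
  exact ⟨e * t, by rw [he, ht, hnz]; ring⟩

lemma aux3 (c d : ℤ) (n m d₁ : ℕ) (hd₁ : d₁ = Int.gcd (c-d) n)
    (hnm : n = d₁ * m) :
    Int.gcd (d * (m:ℤ)) n = m * Int.gcd c ((Int.gcd d n : ℕ):ℤ) := by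
  have h1 : Int.gcd (d * (m:ℤ)) n = Int.gcd d ((d₁:ℕ):ℤ) * m := by
    have hc : ((n:ℕ):ℤ) = (d₁:ℤ) * (m:ℤ) := by exact_mod_cast congrArg (Nat.cast : ℕ → ℤ) hnm
    rw [hc, Int.gcd_mul_right, Int.natAbs_natCast]
  rw [h1, mul_comm]
  congr 1
  apply Nat.dvd_antisymm
  · have hL1 : ((Int.gcd d ((d₁:ℕ):ℤ) : ℕ):ℤ) ∣ d := (Int.gcd_dvd_left _ _)
    have hL2 : ((Int.gcd d ((d₁:ℕ):ℤ) : ℕ):ℤ) ∣ (c - d) :=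
      dvd_trans (Int.gcd_dvd_right _ _) (by rw [hd₁]; exact_mod_cast (Int.gcd_dvd_left _ _))
    have hL3 : ((Int.gcd d ((d₁:ℕ):ℤ) : ℕ):ℤ) ∣ (n:ℤ) :=
      dvd_trans (Int.gcd_dvd_right _ _) (by rw [hd₁]; exact (Int.gcd_dvd_right _ _))
    rw [← Int.natCast_dvd_natCast]
    apply Int.dvd_coe_gcd
    · have hc : c = (c - d) + d := by ring
      rw [hc]; exact dvd_add hL2 hL1
    · exact Int.dvd_coe_gcd hL1 hL3
  · have hR1 : ((Int.gcd c ((Int.gcd d n : ℕ):ℤ) : ℕ):ℤ) ∣ c := (Int.gcd_dvd_left _ _)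
    have hR2 : ((Int.gcd c ((Int.gcd d n : ℕ):ℤ) : ℕ):ℤ) ∣ d :=
      dvd_trans (Int.gcd_dvd_right _ _) (by exact_mod_cast (Int.gcd_dvd_left _ _))
    have hR3 : ((Int.gcd c ((Int.gcd d n : ℕ):ℤ) : ℕ):ℤ) ∣ (n:ℤ) :=
      dvd_trans (Int.gcd_dvd_right _ _) (Int.gcd_dvd_right _ _)
    rw [← Int.natCast_dvd_natCast]
    apply Int.dvd_coe_gcd hR2
    rw [hd₁]
    apply Int.dvd_coe_gcd _ hR3
    have hc : c - d = c - d := rfl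
    exact dvd_sub hR1 hR2


lemma aux5 (a w : ℤ) (m' g' : ℕ) (hg' : 0 < g')
    (hgcd : Int.gcd a ((m' * g' : ℕ):ℤ) = g') (h : ((m' * g' : ℕ):ℤ) ∣ a * w) :
    (m':ℤ) ∣ w := by
  obtain ⟨e, he⟩ : ((g':ℕ):ℤ) ∣ a := by
    rw [← hgcd]; exact (Int.gcd_dvd_left _ _)
  have hcop : Int.gcd (m':ℤ) e = 1 := by
    have h1 : Int.gcd a ((m' * g' : ℕ):ℤ) = g' * Int.gcd e m' := by
      rw [he, show ((m' * g' : ℕ):ℤ) = (g':ℤ) * (m':ℤ) by push_cast; ring,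
        Int.gcd_mul_left, Int.natAbs_natCast]
    rw [h1] at hgcd
    have h3 : g' * Int.gcd e m' = g' * 1 := by rw [mul_one]; exact hgcd
    have := Nat.eq_of_mul_eq_mul_left hg' h3
    rw [Int.gcd_comm]; exact this
  have h2 : (m':ℤ) ∣ e * w := by
    rcases h with ⟨t, ht⟩
    rw [he] at ht
    push_cast at ht
    rcases eq_or_lt_of_le (Nat.zero_le g') with hg0 | hg0
    · omega
    · refine ⟨t, ?_⟩
      have hgz : (g':ℤ) ≠ 0 := by positivity
      have : (g':ℤ) * (e * w) = (g':ℤ) * ((m':ℤ) * t) := by push_cast at ht ⊢; linarith [ht]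
      exact mul_left_cancel₀ hgz this
  exact (Int.isCoprime_iff_gcd_eq_one.mpr hcop).dvd_of_dvd_mul_left h2

lemma aux6 (a b c : ℤ) : Int.gcd a ((Int.gcd b c : ℕ):ℤ) = Int.gcd ((Int.gcd a c : ℕ):ℤ) b := by
  apply Nat.dvd_antisymm
  · rw [← Int.natCast_dvd_natCast]
    apply Int.dvd_coe_gcd
    · exact Int.dvd_coe_gcd (Int.gcd_dvd_left _ _)
        (dvd_trans (Int.gcd_dvd_right _ _) (Int.gcd_dvd_right _ _))
    · exact dvd_trans (Int.gcd_dvd_right _ _) (Int.gcd_dvd_left _ _)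
  · rw [← Int.natCast_dvd_natCast]
    apply Int.dvd_coe_gcd
    · exact dvd_trans (Int.gcd_dvd_left _ _) (Int.gcd_dvd_left _ _)
    · exact Int.dvd_coe_gcd (Int.gcd_dvd_right _ _)
        (dvd_trans (Int.gcd_dvd_left _ _) (Int.gcd_dvd_right _ _))


lemma aux_char (n r : ℕ) (c d : ℤ) (B : Matrix (Fin r) (Fin r) (ZMod n))
    (hB : ∀ i j, B i j = if i = j then (c : ZMod n) else (d : ZMod n))
    (x : Fin r → ZMod n) :
    B.mulVec x = 0 ↔ ∀ i, ((c : ZMod n) - d) * x i + d * ∑ j, x j = 0 := by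
  have h1 : ∀ i, B.mulVec x i = ((c:ZMod n)-d) * x i + d * ∑ j, x j := by
    intro i
    simp only [Matrix.mulVec, dotProduct, hB]
    rw [Finset.mul_sum,
      show (((c:ZMod n)-d) * x i) = ∑ j, if j = i then ((c:ZMod n)-d) * x j else 0 by
        rw [Finset.sum_ite_eq']; simp,
      ← Finset.sum_add_distrib]
    apply Finset.sum_congr rfl
    intro j _
    by_cases h : i = j
    · subst h; simp; ring
    · simp [h, Ne.symm h]
  constructor
  · intro h i; rw [← h1 i, h]; rfl
  · intro h; funext i; rw [h1 i, h i]; rfl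

lemma aux_cast (m n : ℕ) (h : m ∣ n) (z : ℤ) :
    (ZMod.cast ((z : ZMod n)) : ZMod m) = (z : ZMod m) := by
  rw [← ZMod.castHom_apply (h := h) ((z : ZMod n)), map_intCast]

lemma aux_val (n : ℕ) [NeZero n] (a : ZMod n) : a = (((a.val : ℤ)) : ZMod n) := by
  push_cast
  rw [ZMod.natCast_val, ZMod.cast_id]


lemma aux_key (n r : ℕ) (hn : 0 < n) (c d : ℤ) (m d₁ : ℕ)
    (hd₁ : d₁ = Int.gcd (c-d) n) (hnm : n = d₁ * m)
    (H : Int.gcd ((Int.gcd (c + ((r:ℤ) - 1) * d) n : ℕ):ℤ) (d * (m:ℤ))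
      = Int.gcd c ((Int.gcd d n : ℕ):ℤ))
    (z : Fin r → ZMod n)
    (hz : ∀ i, ((c : ZMod n) - d) * z i + d * ∑ j, z j = 0) (i : Fin r) :
    (ZMod.cast (z i) : ZMod m) = 0 := by
  haveI : NeZero n := ⟨hn.ne'⟩
  set g : ℕ := Int.gcd c ((Int.gcd d n : ℕ):ℤ) with hg
  set X : Fin r → ℤ := fun j => ((z j).val : ℤ) with hX
  have hzX : ∀ j, z j = ((X j : ℤ) : ZMod n) := fun j => aux_val n (z j)
  have heq : ∀ i, (n:ℤ) ∣ ((c-d) * X i + d * ∑ j, X j) := by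
    intro i
    rw [← ZMod.intCast_zmod_eq_zero_iff_dvd]
    push_cast
    simp only [← hzX]
    exact hz i
  have hdiff : ∀ j, (m:ℤ) ∣ (X j - X i) := by
    intro j
    apply aux1 c d n m d₁ hn hd₁ hnm
    have h2 := dvd_sub (heq j) (heq i)
    have e : ((c-d) * X j + d*∑ k, X k) - ((c-d) * X i + d*∑ k, X k)
        = (c-d)*(X j - X i) := by ring
    rwa [e] at h2
  have hS : (m:ℤ) ∣ ((∑ j, X j) - (r:ℤ) * X i) := by
    have e : (∑ j, X j) - (r:ℤ) * X i = ∑ j, (X j - X i) := by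
      rw [Finset.sum_sub_distrib, Finset.sum_const, Finset.card_univ, Fintype.card_fin,
        nsmul_eq_mul]
    rw [e]; exact Finset.dvd_sum fun j _ => hdiff j
  obtain ⟨t, ht⟩ := hS
  have hsum : (∑ j, X j) = (r:ℤ) * X i + (m:ℤ)*t := by linarith [ht]
  set d₂' : ℤ := c + ((r:ℤ)-1)*d with hd₂'
  have hNdvd : ((m * g : ℕ):ℤ) ∣ d₂' * X i := by
    have hN := aux3 c d n m d₁ hd₁ hnm
    rw [← hg] at hN
    rw [show ((m * g : ℕ):ℤ) = ((Int.gcd (d * (m:ℤ)) n : ℕ):ℤ) by rw [hN]]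
    have e : d₂' * X i = ((c-d) * X i + d * ∑ j, X j) - (d * (m:ℤ)) * t := by
      rw [hd₂', hsum]; ring
    rw [e]
    exact dvd_sub (dvd_trans (Int.gcd_dvd_right _ _) (heq i)) (Dvd.dvd.mul_right (Int.gcd_dvd_left _ _) t)
  have hgpos : 0 < g := by
    rw [hg, Int.gcd_pos_iff]; right
    have h3 : 0 < Int.gcd d n := by rw [Int.gcd_pos_iff]; right; exact_mod_cast hn.ne'
    exact_mod_cast h3.ne'
  have hgcd2 : Int.gcd d₂' ((m * g : ℕ):ℤ) = g := by
    have hN := aux3 c d n m d₁ hd₁ hnm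
    rw [← hg] at hN
    rw [show ((m * g : ℕ):ℤ) = ((Int.gcd (d * (m:ℤ)) n : ℕ):ℤ) by rw [hN]]
    rw [aux6 d₂' (d*(m:ℤ)) n]
    exact H
  have hm := aux5 d₂' (X i) m g hgpos hgcd2 hNdvd
  rw [hzX i, aux_cast m n ⟨d₁, by rw [hnm]; ring⟩ (X i)]
  exact (ZMod.intCast_zmod_eq_zero_iff_dvd _ m).mpr hm

lemma aux_fwd (n r : ℕ) (hn : 0 < n) (hr : 0 < r) (c d : ℤ) (m d₁ : ℕ)
    (hd₁ : d₁ = Int.gcd (c-d) n) (hnm : n = d₁ * m)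
    (H : ∀ x : Fin r → ZMod n, (∀ i, ((c : ZMod n) - d) * x i + d * ∑ j, x j = 0) →
         (ZMod.cast (x ⟨0, hr⟩) : ZMod m) = 0) :
    Int.gcd ((Int.gcd (c + ((r:ℤ) - 1) * d) n : ℕ):ℤ) (d * (m:ℤ))
      = Int.gcd c ((Int.gcd d n : ℕ):ℤ) := by
  haveI : NeZero n := ⟨hn.ne'⟩
  have hmpos : 0 < m := by
    rcases Nat.eq_zero_or_pos m with h | h
    · subst h; simp at hnm; omega
    · exact h
  set d₂' : ℤ := c + ((r:ℤ)-1)*d with hd₂'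
  set g : ℕ := Int.gcd c ((Int.gcd d n : ℕ):ℤ) with hg
  set G : ℕ := Int.gcd ((Int.gcd d₂' n : ℕ):ℤ) (d*(m:ℤ)) with hG
  set N : ℕ := Int.gcd (d*(m:ℤ)) n with hN'
  have hN : N = m * g := aux3 c d n m d₁ hd₁ hnm
  have hgc : (g:ℤ) ∣ c := (Int.gcd_dvd_left _ _)
  have hgd : (g:ℤ) ∣ d := dvd_trans (Int.gcd_dvd_right _ _) (Int.gcd_dvd_left _ _)
  have hgn : (g:ℤ) ∣ (n:ℤ) := dvd_trans (Int.gcd_dvd_right _ _) (Int.gcd_dvd_right _ _)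
  have hgG : g ∣ G := by
    rw [← Int.natCast_dvd_natCast]
    apply Int.dvd_coe_gcd
    · refine Int.dvd_coe_gcd ?_ hgn
      rw [hd₂']
      exact dvd_add hgc (Dvd.dvd.mul_left hgd _)
    · exact Dvd.dvd.mul_right hgd _
  have hGd2 : (G:ℤ) ∣ ((Int.gcd d₂' n : ℕ):ℤ) := (Int.gcd_dvd_left _ _)
  have hGdm : (G:ℤ) ∣ d*(m:ℤ) := (Int.gcd_dvd_right _ _)
  have hGn : (G:ℤ) ∣ (n:ℤ) := dvd_trans hGd2 (Int.gcd_dvd_right _ _)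
  have hGN : G ∣ N := by
    rw [← Int.natCast_dvd_natCast]; exact Int.dvd_coe_gcd hGdm hGn
  set u : ℕ := N / G with hu
  have huG : G * u = N := Nat.mul_div_cancel' hGN
  have hNd2u : ((N:ℕ):ℤ) ∣ d₂' * u := by
    obtain ⟨e, he⟩ : (G:ℤ) ∣ d₂' := dvd_trans hGd2 (Int.gcd_dvd_left _ _)
    refine ⟨e, ?_⟩
    have h2 : ((N:ℕ):ℤ) = (G:ℤ) * u := by exact_mod_cast huG.symm
    rw [he, h2]; ring
  obtain ⟨a, b, hab⟩ : ∃ a b : ℤ, d₂' * u = d*(m:ℤ)*a + (n:ℤ)*b := by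
    obtain ⟨e, he⟩ := hNd2u
    refine ⟨Int.gcdA (d*(m:ℤ)) n * e, Int.gcdB (d*(m:ℤ)) n * e, ?_⟩
    have hbez := Int.gcd_eq_gcd_ab (d*(m:ℤ)) (n:ℤ)
    rw [he, hN', hbez]; ring
  set i₀ : Fin r := ⟨0, hr⟩ with hi₀
  set x : Fin r → ZMod n := fun i =>
    if i = i₀ then (((u:ℤ) - a*(m:ℤ) : ℤ) : ZMod n) else (((u:ℤ) : ℤ) : ZMod n) with hx
  have hsum : ∑ j, x j = (((r:ℤ)*(u:ℤ) - a*(m:ℤ) : ℤ) : ZMod n) := by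
    have e1 : ∀ j, x j = (((u:ℤ) : ℤ) : ZMod n)
        + (if j = i₀ then ((-(a*(m:ℤ)) : ℤ) : ZMod n) else 0) := by
      intro j
      by_cases h : j = i₀
      · simp only [hx, if_pos h]
        push_cast
        ring
      · simp only [hx, if_neg h, add_zero]
    rw [Finset.sum_congr rfl (fun j _ => e1 j), Finset.sum_add_distrib, Finset.sum_const,
      Finset.card_univ, Fintype.card_fin, Finset.sum_ite_eq' Finset.univ i₀,
      if_pos (Finset.mem_univ _), nsmul_eq_mul]
    push_cast
    ring
  rw [hd₂'] at hab
  have hsol : ∀ i, ((c : ZMod n) - d) * x i + d * ∑ j, x j = 0 := by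
    intro i
    rw [hsum]
    by_cases h : i = i₀
    · simp only [hx, if_pos h]
      rw [show ((c:ZMod n) - d) * (((u:ℤ) - a*(m:ℤ) : ℤ) : ZMod n)
            + (d:ZMod n) * (((r:ℤ)*(u:ℤ) - a*(m:ℤ) : ℤ):ZMod n)
          = (((c - d) * ((u:ℤ) - a*(m:ℤ)) + d * ((r:ℤ)*(u:ℤ) - a*(m:ℤ)) : ℤ) : ZMod n) by
        push_cast; ring]
      rw [ZMod.intCast_zmod_eq_zero_iff_dvd]
      have e2 : (c - d) * ((u:ℤ) - a*(m:ℤ)) + d * ((r:ℤ)*(u:ℤ) - a*(m:ℤ))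
          = (n:ℤ)*b - (c-d)*(a*(m:ℤ)) := by linear_combination hab
      rw [e2]
      exact dvd_sub (Dvd.intro _ rfl)
        (aux2 c d n m d₁ hd₁ hnm _ (Dvd.dvd.mul_left dvd_rfl a))
    · simp only [hx, if_neg h]
      rw [show ((c:ZMod n) - d) * (((u:ℤ) : ℤ) : ZMod n)
            + (d:ZMod n) * (((r:ℤ)*(u:ℤ) - a*(m:ℤ) : ℤ):ZMod n)
          = (((c - d) * (u:ℤ) + d * ((r:ℤ)*(u:ℤ) - a*(m:ℤ)) : ℤ) : ZMod n) by
        push_cast; ring]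
      rw [ZMod.intCast_zmod_eq_zero_iff_dvd]
      have e2 : (c - d) * (u:ℤ) + d * ((r:ℤ)*(u:ℤ) - a*(m:ℤ)) = (n:ℤ)*b := by
        linear_combination hab
      rw [e2]
      exact Dvd.intro _ rfl
  have hcast := H x hsol
  simp only [hx, if_pos rfl] at hcast
  rw [aux_cast m n ⟨d₁, by rw [hnm]; ring⟩, ZMod.intCast_zmod_eq_zero_iff_dvd] at hcast
  have hmu : (m:ℤ) ∣ (u:ℤ) := by
    have h3 : (m:ℤ) ∣ a*(m:ℤ) := Dvd.dvd.mul_left dvd_rfl a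
    have h4 : (u:ℤ) = ((u:ℤ) - a*(m:ℤ)) + a*(m:ℤ) := by ring
    rw [h4]; exact dvd_add hcast h3
  obtain ⟨s, hs⟩ := Int.natCast_dvd_natCast.mp hmu
  have h5 : m * (G * s) = m * g := by
    rw [← hN, ← huG, hs]; ring
  have hGs : G * s = g := Nat.eq_of_mul_eq_mul_left hmpos h5
  exact Nat.dvd_antisymm ⟨s, hGs.symm⟩ hgG


theorem stmt_18 (n r : ℕ) (hn : 0 < n) (hr : 0 < r) (c d : ℤ)
    (B : Matrix (Fin r) (Fin r) (ZMod n))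
    (hB : ∀ i j, B i j = if i = j then (c : ZMod n) else (d : ZMod n)) :
    (∀ x y : Fin r → ZMod n, B.mulVec x = 0 → B.mulVec y = 0 →
      (fun i : Fin r => ((r - 1 - i.val : ℕ) : ZMod (n / Int.gcd (c - d) n)) -
        (ZMod.cast (x i) : ZMod (n / Int.gcd (c - d) n)))
      = (fun i : Fin r => ((r - 1 - i.val : ℕ) : ZMod (n / Int.gcd (c - d) n)) -
        (ZMod.cast (y i) : ZMod (n / Int.gcd (c - d) n)))) ↔
    Int.gcd ((Int.gcd (c + (r - 1) * d) n : ℤ)) (d * n / (Int.gcd (c - d) n : ℤ))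
      = Int.gcd c (Int.gcd d (n : ℤ) : ℤ) := by
  haveI : NeZero n := ⟨hn.ne'⟩
  set d₁ : ℕ := Int.gcd (c - d) n with hd₁def
  set m : ℕ := n / d₁ with hmdef
  have hd₁n : d₁ ∣ n := by
    have h1 : ((d₁:ℕ):ℤ) ∣ ((n:ℕ):ℤ) := (Int.gcd_dvd_right _ _)
    exact_mod_cast h1
  have hnm : n = d₁ * m := (Nat.mul_div_cancel' hd₁n).symm
  have hd₁0 : ((d₁:ℕ):ℤ) ≠ 0 := by
    have h2 : 0 < d₁ := by
      rw [hd₁def, Int.gcd_pos_iff]; right; exact_mod_cast hn.ne'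
    exact_mod_cast h2.ne'
  have hrw : d * (n:ℤ) / ((d₁:ℕ):ℤ) = d * (m:ℤ) := by
    rw [show ((n:ℕ):ℤ) = (d₁:ℤ)*(m:ℤ) from by exact_mod_cast hnm,
      show d * ((d₁:ℤ)*(m:ℤ)) = (d₁:ℤ) * (d*(m:ℤ)) from by ring,
      Int.mul_ediv_cancel_left _ hd₁0]
  rw [hrw]
  have hmn : m ∣ n := ⟨d₁, by rw [hnm]; ring⟩
  constructor
  · intro Hl
    apply aux_fwd n r hn hr c d m d₁ hd₁def hnm
    intro x hsolx
    have hx : B.mulVec x = 0 := (aux_char n r c d B hB x).mpr hsolx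
    have h0 : B.mulVec (0 : Fin r → ZMod n) = 0 := by simp [Matrix.mulVec_zero]
    have hfun := congrFun (Hl x 0 hx h0) ⟨0, hr⟩
    dsimp only at hfun
    have hz : (ZMod.cast ((0 : Fin r → ZMod n) ⟨0,hr⟩) : ZMod m) = 0 := by
      have h3 := aux_cast m n hmn 0
      simpa using h3
    rw [sub_right_inj] at hfun
    rw [hfun]
    exact hz
  · intro H x y hx hy
    funext i
    have kx := aux_key n r hn c d m d₁ hd₁def hnm H x ((aux_char n r c d B hB x).mp hx) i
    have ky := aux_key n r hn c d m d₁ hd₁def hnm H y ((aux_char n r c d B hB y).mp hy) i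
    rw [kx, ky]
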